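/- Let α, γ, r, ℓ > 0 with r ≠ ℓ, and consider the matrix h⁻ with rows (α, −γ) and (−α, γ + r − ℓ). Then the vector a = (a₀, a₁) with a₀, a₁ > 0 is an eigenvector of h⁻ if and only if the fugacity z = a₁/a₀ satisfies the quadratic equation z² + ((γ − α + r − ℓ)/γ)·z − α/γ = 0, and in that case the eigenvalue equals α − γz = (r − ℓ)·z/(1 + z). -/

import Mathlib

theorem left_boundary_eigenvector_iff (α γ r ℓ a₀ a₁ : ℝ)
    (hα : 0 < α) (hγ : 0 < γ) (hr : 0 < r) (hl : 0 < ℓ) (hrl : r ≠ ℓ)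
    (ha₀ : 0 < a₀) (ha₁ : 0 < a₁)
    (hm : Matrix (Fin 2) (Fin 2) ℝ) (hhm : hm = !![α, -γ; -α, γ + r - ℓ])
    (z : ℝ) (hz : z = a₁ / a₀) :
    ((∃ lam : ℝ, hm.mulVec ![a₀, a₁] = lam • ![a₀, a₁]) ↔
      z^2 + ((γ - α + r - ℓ)/γ) * z - α/γ = 0) ∧
    (∀ lam : ℝ, hm.mulVec ![a₀, a₁] = lam • ![a₀, a₁] →
      lam = α - γ * z ∧ α - γ * z = (r - ℓ) * z / (1 + z)) := by
  subst hhm hz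
  have ha₀' : a₀ ≠ 0 := ha₀.ne'
  have hγ' : γ ≠ 0 := hγ.ne'
  have h1z : (0:ℝ) < a₀ + a₁ := by positivity
  have h1z' : a₀ + a₁ ≠ 0 := h1z.ne'
  have key : ∀ lam : ℝ, (!![α, -γ; -α, γ + r - ℓ]).mulVec ![a₀, a₁] = lam • ![a₀, a₁] ↔
      (α*a₀ - γ*a₁ = lam*a₀ ∧ -α*a₀ + (γ+r-ℓ)*a₁ = lam*a₁) := by
    intro lam
    constructor
    · intro h
      have h0 := congrFun h 0
      have h1 := congrFun h 1
      simp [Matrix.mulVec, dotProduct, Fin.sum_univ_two] at h0 h1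
      constructor <;> linarith
    · rintro ⟨h0, h1⟩
      funext i
      fin_cases i <;> simp [Matrix.mulVec, dotProduct, Fin.sum_univ_two] <;> linarith
  constructor
  · constructor
    · rintro ⟨lam, h⟩
      obtain ⟨h0, h1⟩ := (key lam).1 h
      have e : (-α*a₀+(γ+r-ℓ)*a₁)*a₀ = (α*a₀-γ*a₁)*a₁ := by rw [h1, h0]; ring
      field_simp
      linear_combination e
    · intro hq
      refine ⟨α - γ * (a₁/a₀), (key _).2 ⟨by field_simp, ?_⟩⟩
      field_simp at hq ⊢
      apply mul_left_cancel₀ (mul_ne_zero hγ' ha₀')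
      linear_combination (γ*a₀) * hq
  · intro lam h
    obtain ⟨h0, h1⟩ := (key lam).1 h
    have hlam : lam = α - γ * (a₁ / a₀) := by
      field_simp
      linarith
    refine ⟨hlam, ?_⟩
    have e : (-α*a₀+(γ+r-ℓ)*a₁)*a₀ = (α*a₀-γ*a₁)*a₁ := by rw [h1, h0]; ring
    have hne : 1 + a₁ / a₀ ≠ 0 := by positivity
    field_simp
    ring_nf
    nlinarith [e]
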